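/- arXiv:1502.02902 — 2 statements merged into one kernel-verified Lean document; each statement's English description precedes it below -/
import Mathlib

section
/- Let G be a finite group with exponent e, let r be an integer coprime to e, let m be an integer, and let g, y be elements of G. Then the number of elements x ∈ G satisfying x^m = (g*x)^m = y equals the number of elements x ∈ G satisfying x^m = (g^r * x)^m = y^r. -/
set_option linter.unusedSectionVars false
set_option maxHeartbeats 1600000

open Finset MonoidAlgebra Function MulAction

section Basic
variable {G : Type*} [Group G] [DecidableEq G]
variable {ι : Type*} [DecidableEq ι]

lemma coeff_sum_single {R : Type*} [CommSemiring R] (s : Finset ι) (u : ι → G) (z : G) :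
    (∑ q ∈ s, MonoidAlgebra.single (u q) (1 : R)).coeff z =
      ((s.filter (fun q => u q = z)).card : R) := by
  classical
  rw [MonoidAlgebra.coeff_sum, Finset.sum_apply']
  simp only [MonoidAlgebra.coeff_single, Finsupp.single_apply]
  rw [Finset.sum_boole]


lemma prod_shift {k : ℕ} (f : Fin (k+1) → G) :
    (List.ofFn fun i => f (i+1)).prod = (f 0)⁻¹ * (List.ofFn f).prod * (f 0) := by
  have h1 : (List.ofFn fun i => f (i+1)) =
      (List.ofFn fun i : Fin k => f i.succ).concat (f 0) := by
    rw [List.ofFn_succ' (fun i => f (i+1))]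
    have e1 : (fun i : Fin k => f (i.castSucc + 1)) = fun i : Fin k => f i.succ := by
      funext i; exact congrArg f Fin.coeSucc_eq_succ
    rw [e1, Fin.last_add_one]
  have h2 : List.ofFn f = f 0 :: (List.ofFn fun i : Fin k => f i.succ) :=
    List.ofFn_succ (f := f)
  rw [h1, List.prod_concat, h2, List.prod_cons]
  group

end Basic

section Expand
variable {G : Type*} [Group G] [DecidableEq G]
variable {ι : Type*} [DecidableEq ι] [Fintype ι]
variable {R : Type*} [CommSemiring R]

/-- Expansion of a power of a sum of singles as a sum over tuples. -/
lemma pow_expand (s : Finset ι) (u : ι → G) (k : ℕ) :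
    (∑ q ∈ s, MonoidAlgebra.single (u q) (1 : R)) ^ k =
      ∑ t ∈ Fintype.piFinset (fun _ : Fin k => s),
        MonoidAlgebra.single ((List.ofFn fun i => u (t i)).prod) (1 : R) := by
  classical
  induction k with
  | zero =>
      rw [pow_zero]
      have huniv : Fintype.piFinset (fun _ : Fin 0 => s) = Finset.univ := by
        ext t; simp [Fintype.mem_piFinset]
      rw [huniv, Fintype.sum_unique]
      simp [MonoidAlgebra.one_def]
  | succ k ih =>
      rw [pow_succ', ih, Finset.sum_mul_sum]
      rw [← Finset.sum_product']
      refine Finset.sum_nbij' (fun qt => Fin.cons qt.1 qt.2)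
        (fun t => (t 0, Fin.tail t)) ?_ ?_ ?_ ?_ ?_
      · rintro ⟨q, t⟩ h
        simp only [Finset.mem_product, Fintype.mem_piFinset] at h ⊢
        intro i
        refine Fin.cases ?_ ?_ i
        · simpa using h.1
        · intro j; simpa [Fin.cons_succ] using h.2 j
      · intro t ht
        simp only [Finset.mem_product, Fintype.mem_piFinset] at ht ⊢
        exact ⟨ht 0, fun j => ht j.succ⟩
      · rintro ⟨q, t⟩ _
        simp [Fin.tail_cons]
      · intro t _
        exact Fin.cons_self_tail t
      · rintro ⟨q, t⟩ _
        rw [MonoidAlgebra.single_mul_single, one_mul]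
        congr 1
        rw [List.ofFn_succ]
        rw [List.prod_cons]
        simp [Fin.cons_succ]

end Expand

section Rotate
variable {β : Type*} [DecidableEq β] [Fintype β]

open Fin.NatCast Fin.CommRing in
lemma card_modEq_fixed (p : ℕ) [hp : Fact p.Prime]
    (S : Finset (Fin p → β)) (hS : ∀ t ∈ S, (fun i => t (i+1)) ∈ S) :
    S.card ≡ (S.filter fun t => ∀ i, t i = t 0).card [MOD p] := by
  classical
  haveI : NeZero p := ⟨hp.out.ne_zero⟩
  set α := {t // t ∈ S} with hα
  -- the rotation as a permutation of α
  have hinj : Function.Injective (fun x : α => (⟨fun i => x.1 (i+1), hS _ x.2⟩ : α)) := by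
    rintro ⟨t, ht⟩ ⟨t', ht'⟩ h
    simp only [Subtype.mk.injEq] at h
    refine Subtype.ext (funext fun i => ?_)
    have := congrFun h (i - 1)
    simpa [sub_add_cancel] using this
  let σ : Equiv.Perm α :=
    Equiv.ofBijective _ ((Finite.injective_iff_bijective).mp hinj)
  have hσ_apply : ∀ x : α, (σ x).1 = fun i => x.1 (i+1) := fun x => rfl
  have hσpow : ∀ (n : ℕ) (x : α), ((σ ^ n) x).1 = fun i => x.1 (i + (n : Fin p)) := by
    intro n
    induction n with
    | zero => intro x; simp
    | succ n ih =>
        intro x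
        funext i
        calc ((σ ^ (n+1)) x).1 i = (σ ((σ ^ n) x)).1 i := by
              rw [pow_succ', Equiv.Perm.mul_apply]
          _ = ((σ ^ n) x).1 (i + 1) := by rw [hσ_apply]
          _ = x.1 ((i + 1) + (n : Fin p)) := by rw [ih x]
          _ = x.1 (i + ((n+1 : ℕ) : Fin p)) := by
              congr 1; push_cast; ring
  have hσp : σ ^ p = 1 := by
    apply Equiv.ext
    intro x
    apply Subtype.ext
    rw [hσpow p x]
    funext i
    rw [Fin.natCast_self, add_zero]
    rfl
  -- the subgroup generated by σ is a p-group
  have hcard : Nat.card (Subgroup.zpowers σ) = orderOf σ := Nat.card_zpowers σ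
  have horder : orderOf σ ∣ p := orderOf_dvd_of_pow_eq_one hσp
  have hPG : IsPGroup p (Subgroup.zpowers σ) := by
    rcases (Nat.Prime.eq_one_or_self_of_dvd hp.out _ horder) with h | h
    · exact IsPGroup.of_card (n := 0) (by rw [hcard, h, pow_zero])
    · exact IsPGroup.of_card (n := 1) (by rw [hcard, h, pow_one])
  have hmod := hPG.card_modEq_card_fixedPoints α
  -- identify the two cardinalities
  have hcardα : Nat.card α = S.card := by
    rw [Nat.card_eq_fintype_card, Fintype.card_coe]
  -- fixed points are exactly constant tuples
  have hfix : ∀ x : α, x ∈ fixedPoints (Subgroup.zpowers σ) α ↔ ∀ i, x.1 i = x.1 0 := by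
    intro x
    constructor
    · intro hx i
      have h1 : σ x = x := hx ⟨σ, Subgroup.mem_zpowers σ⟩
      have hshift : ∀ j : Fin p, x.1 (j + 1) = x.1 j := by
        intro j
        conv_rhs => rw [← h1]
        rw [hσ_apply]
      have key : ∀ n : ℕ, x.1 ((n : Fin p)) = x.1 0 := by
        intro n
        induction n with
        | zero => norm_num
        | succ n ih => rw [show ((n+1 : ℕ) : Fin p) = (n : Fin p) + 1 by push_cast; ring,
            hshift, ih]
      rw [← Fin.cast_val_eq_self i]
      exact key i.val
    · intro hx
      intro h
      obtain ⟨k, hk⟩ := h.2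
      have hfix1 : Function.IsFixedPt σ x := by
        apply Subtype.ext
        rw [hσ_apply]
        funext i
        rw [hx (i + 1), hx i]
      have : Function.IsFixedPt (σ ^ k) x := hfix1.perm_zpow k
      show h • x = x
      calc h • x = (h : Equiv.Perm α) x := rfl
        _ = (σ ^ k) x := by rw [← hk]
        _ = x := this
  -- conclude
  have hcfix : Nat.card (fixedPoints (Subgroup.zpowers σ) α) =
      (S.filter fun t => ∀ i, t i = t 0).card := by
    rw [← Fintype.card_coe (S.filter fun t => ∀ i, t i = t 0), Nat.card_eq_fintype_card]
    apply Fintype.card_congr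
    refine ⟨fun x => ⟨x.1.1, ?_⟩, fun y => ⟨⟨y.1, (Finset.mem_filter.mp y.2).1⟩, ?_⟩, ?_, ?_⟩
    · rcases x with ⟨x, hx⟩
      rw [Finset.mem_filter]
      exact ⟨x.2, (hfix x).mp hx⟩
    · rw [hfix]
      exact (Finset.mem_filter.mp y.2).2
    · rintro ⟨⟨x, hxS⟩, hx⟩; rfl
    · rintro ⟨y, hy⟩; rfl
  rw [← hcardα, ← hcfix]
  exact hmod

end Rotate


section Main
variable {G : Type*} [Group G] [DecidableEq G] [Fintype G]
variable {ι : Type*} [DecidableEq ι] [Fintype ι]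

/-- conjugation of an ordered product -/
lemma prod_conj (c : G) {k : ℕ} (f : Fin k → G) :
    (List.ofFn fun i => c * f i * c⁻¹).prod = c * (List.ofFn f).prod * c⁻¹ := by
  have : (List.ofFn fun i => c * f i * c⁻¹) =
      (List.ofFn f).map (MulAut.conj c).toMonoidHom := by
    rw [List.map_ofFn]
    rfl
  rw [this, List.prod_hom]
  rfl

/-- p-th power of a conjugation-stable sum of singles is its pushforward
under the p-power map. -/
lemma necklace (p : ℕ) [hp : Fact p.Prime] (hpG : Fintype.card G < p)
    (s : Finset ι) (u : ι → G) (γ : G → ι ≃ ι)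
    (hγs : ∀ c q, q ∈ s ↔ γ c q ∈ s)
    (hγu : ∀ c q, u (γ c q) = c * u q * c⁻¹) :
    (∑ q ∈ s, MonoidAlgebra.single (u q) (1 : ZMod p)) ^ p =
      ∑ q ∈ s, MonoidAlgebra.single ((u q) ^ p) (1 : ZMod p) := by
  classical
  have hp1 : 1 < p := hp.out.one_lt
  obtain ⟨k, rfl⟩ : ∃ k, p = k + 1 := ⟨p - 1, (Nat.succ_pred_eq_of_pos hp.out.pos).symm⟩
  set p := k + 1 with hpdef
  ext z
  rw [pow_expand, coeff_sum_single, coeff_sum_single]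
  set P : (Fin p → ι) → G := fun t => (List.ofFn fun i => u (t i)).prod with hP
  set Tz := (Fintype.piFinset (fun _ : Fin p => s)).filter (fun t => P t = z) with hTz
  set sz := s.filter (fun q => (u q) ^ p = z) with hsz
  show ((Tz.card : ZMod p)) = (sz.card : ZMod p)
  -- the conjugacy class of z
  set CC : Finset G := Finset.univ.image (fun c : G => c * z * c⁻¹) with hCC
  have hzCC : z ∈ CC := by
    rw [hCC, Finset.mem_image]
    exact ⟨1, Finset.mem_univ 1, by group⟩
  have hCCconj : ∀ d : G, ∀ w ∈ CC, d * w * d⁻¹ ∈ CC := by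
    intro d w hw
    rw [hCC, Finset.mem_image] at hw ⊢
    obtain ⟨c, _, rfl⟩ := hw
    exact ⟨d * c, Finset.mem_univ _, by group⟩
  have hCCpos : 0 < CC.card := Finset.card_pos.mpr ⟨z, hzCC⟩
  have hCClt : CC.card < p := lt_of_le_of_lt (le_trans (Finset.card_le_card
    (Finset.subset_univ CC)) (le_of_eq (Finset.card_univ))) hpG
  have hCCne : ((CC.card : ZMod p)) ≠ 0 := by
    intro h
    rw [ZMod.natCast_eq_zero_iff] at h
    exact absurd (Nat.le_of_dvd hCCpos h) (not_le.mpr hCClt)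
  -- conjugating tuples
  have hPconj : ∀ (c : G) (t : Fin p → ι), P (fun i => γ c (t i)) = c * P t * c⁻¹ := by
    intro c t
    rw [hP]
    simp only []
    rw [show (List.ofFn fun i => u (γ c (t i))) = (List.ofFn fun i => c * u (t i) * c⁻¹) by
      congr 1; funext i; exact hγu c (t i)]
    exact prod_conj c _
  -- fiberwise decomposition of TT over CC
  set TT := (Fintype.piFinset (fun _ : Fin p => s)).filter (fun t => P t ∈ CC) with hTT
  have hfib : ∀ w ∈ CC, TT.filter (fun t => P t = w)
      = (Fintype.piFinset (fun _ : Fin p => s)).filter (fun t => P t = w) := by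
    intro w hw
    rw [hTT, Finset.filter_filter]
    apply Finset.filter_congr
    intro t _
    constructor
    · exact fun h => h.2
    · exact fun h => ⟨h ▸ hw, h⟩
  have hfibcard : ∀ w ∈ CC,
      ((Fintype.piFinset (fun _ : Fin p => s)).filter (fun t => P t = w)).card = Tz.card := by
    intro w hw
    obtain ⟨c, _, rfl⟩ := Finset.mem_image.mp hw
    rw [hTz]
    refine (Finset.card_bij' (fun t _ => fun i => γ c (t i))
      (fun t _ => fun i => (γ c).symm (t i)) ?_ ?_ ?_ ?_).symm
    · intro t ht
      rw [Finset.mem_filter] at ht ⊢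
      refine ⟨?_, ?_⟩
      · rw [Fintype.mem_piFinset]
        intro i
        exact (hγs c (t i)).mp ((Fintype.mem_piFinset.mp ht.1) i)
      · rw [hPconj, ht.2]
    · intro t ht
      rw [Finset.mem_filter] at ht ⊢
      refine ⟨?_, ?_⟩
      · rw [Fintype.mem_piFinset]
        intro i
        have h3 := (hγs c ((γ c).symm (t i)))
        rw [Equiv.apply_symm_apply] at h3
        exact h3.mpr ((Fintype.mem_piFinset.mp ht.1) i)
      · have h5 := hPconj c (fun i => (γ c).symm (t i))
        simp only [Equiv.apply_symm_apply] at h5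
        rw [ht.2] at h5
        have h6 : c * P (fun i => (γ c).symm (t i)) * c⁻¹ = c * z * c⁻¹ := h5.symm
        have h7 := mul_right_cancel h6
        exact mul_left_cancel h7
    · intro t _; funext i; exact (γ c).symm_apply_apply (t i)
    · intro t _; funext i; exact (γ c).apply_symm_apply (t i)
  have hTTcard : TT.card = CC.card * Tz.card := by
    rw [Finset.card_eq_sum_card_fiberwise (f := P) (s := TT) (t := CC)
      (fun t ht => (Finset.mem_filter.mp ht).2)]
    calc ∑ w ∈ CC, (TT.filter fun t => P t = w).card
        = ∑ w ∈ CC, Tz.card := by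
          refine Finset.sum_congr rfl fun w hw => ?_
          rw [hfib w hw, hfibcard w hw]
      _ = CC.card * Tz.card := by rw [Finset.sum_const, smul_eq_mul]
  -- SS fiberwise
  set SS := s.filter (fun q => (u q) ^ p ∈ CC) with hSS
  have hSScard : SS.card = CC.card * sz.card := by
    rw [Finset.card_eq_sum_card_fiberwise (f := fun q => (u q) ^ p) (s := SS) (t := CC)
      (fun q hq => (Finset.mem_filter.mp hq).2)]
    have hfib2 : ∀ w ∈ CC, SS.filter (fun q => (u q) ^ p = w)
        = s.filter (fun q => (u q) ^ p = w) := by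
      intro w hw
      rw [hSS, Finset.filter_filter]
      apply Finset.filter_congr
      intro q _
      exact ⟨fun h => h.2, fun h => ⟨h ▸ hw, h⟩⟩
    have hfibcard2 : ∀ w ∈ CC, (s.filter (fun q => (u q) ^ p = w)).card = sz.card := by
      intro w hw
      obtain ⟨c, _, rfl⟩ := Finset.mem_image.mp hw
      rw [hsz]
      refine (Finset.card_bij' (fun q _ => γ c q) (fun q _ => (γ c).symm q) ?_ ?_ ?_ ?_).symm
      · intro q hq
        rw [Finset.mem_filter] at hq ⊢
        refine ⟨(hγs c q).mp hq.1, ?_⟩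
        rw [hγu, conj_pow, hq.2]
      · intro q hq
        rw [Finset.mem_filter] at hq ⊢
        have h3 := hγs c ((γ c).symm q)
        rw [Equiv.apply_symm_apply] at h3
        refine ⟨h3.mpr hq.1, ?_⟩
        have h5 := hγu c ((γ c).symm q)
        rw [Equiv.apply_symm_apply] at h5
        have h6 : c * (u ((γ c).symm q)) ^ p * c⁻¹ = c * z * c⁻¹ := by
          rw [← conj_pow, ← h5, hq.2]
        have h7 := mul_right_cancel h6
        exact mul_left_cancel h7
      · intro q _; exact (γ c).symm_apply_apply q
      · intro q _; exact (γ c).apply_symm_apply q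
    calc ∑ w ∈ CC, (SS.filter fun q => (u q) ^ p = w).card
        = ∑ w ∈ CC, sz.card := by
          refine Finset.sum_congr rfl fun w hw => ?_
          rw [hfib2 w hw, hfibcard2 w hw]
      _ = CC.card * sz.card := by rw [Finset.sum_const, smul_eq_mul]
  -- rotation invariance of TT
  have hTTshift : ∀ t ∈ TT, (fun i => t (i+1)) ∈ TT := by
    intro t ht
    rw [hTT, Finset.mem_filter] at ht ⊢
    refine ⟨?_, ?_⟩
    · rw [Fintype.mem_piFinset]
      intro i
      exact (Fintype.mem_piFinset.mp ht.1) (i+1)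
    · have hps : P (fun i => t (i+1)) = (u (t 0))⁻¹ * P t * (u (t 0)) := by
        rw [hP]
        exact prod_shift (fun i => u (t i))
      rw [hps]
      have := hCCconj (u (t 0))⁻¹ (P t) ht.2
      simpa using this
  have hmodTT := card_modEq_fixed p TT hTTshift
  -- fixed points of rotation are constants; they biject with SS
  have hfixcard : (TT.filter fun t => ∀ i, t i = t 0).card = SS.card := by
    refine Finset.card_bij' (fun t _ => t 0) (fun q _ => fun _ => q) ?_ ?_ ?_ ?_
    · intro t ht
      rw [Finset.mem_filter] at ht
      obtain ⟨htTT, hconst⟩ := ht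
      rw [hTT, Finset.mem_filter] at htTT
      rw [hSS, Finset.mem_filter]
      have hPt : P t = (u (t 0)) ^ p := by
        rw [hP]
        simp only []
        rw [show (List.ofFn fun i => u (t i)) = List.ofFn (fun _ : Fin p => u (t 0)) by
          congr 1; funext i; rw [hconst i]]
        rw [List.ofFn_const, List.prod_replicate]
      refine ⟨(Fintype.mem_piFinset.mp htTT.1) 0, ?_⟩
      rw [← hPt]
      exact htTT.2
    · intro q hq
      rw [hSS, Finset.mem_filter] at hq
      rw [Finset.mem_filter, hTT, Finset.mem_filter]
      refine ⟨⟨?_, ?_⟩, fun i => rfl⟩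
      · rw [Fintype.mem_piFinset]; intro _; exact hq.1
      · have : P (fun _ : Fin p => q) = (u q) ^ p := by
          rw [hP]
          simp only []
          rw [List.ofFn_const, List.prod_replicate]
        rw [this]
        exact hq.2
    · intro t ht
      rw [Finset.mem_filter] at ht
      funext i
      exact (ht.2 i).symm
    · intro q _; rfl
  -- assemble
  have hcast : ((TT.card : ZMod p)) = ((TT.filter fun t => ∀ i, t i = t 0).card : ZMod p) :=
    (ZMod.natCast_eq_natCast_iff _ _ _).mpr hmodTT
  rw [hTTcard, hfixcard, hSScard] at hcast
  push_cast at hcast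
  exact mul_left_cancel₀ hCCne hcast

/-- power-inverse exponent -/
lemma exists_pow_pow_eq (p : ℕ) (hcop : Nat.Coprime p (Fintype.card G)) :
    ∃ k, ∀ x : G, (x ^ p) ^ k = x := by
  rcases (Nat.one_le_iff_ne_zero.mpr (Fintype.card_ne_zero (α := G))).lt_or_eq with h1 | h1
  case inr =>
    haveI : Subsingleton G := by
      rw [← Fintype.card_le_one_iff_subsingleton, ← h1]
    exact ⟨1, fun x => Subsingleton.elim _ x⟩
  case inl =>
    obtain ⟨k, -, hk⟩ := Nat.exists_mul_mod_eq_one_of_coprime hcop h1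
    refine ⟨k, fun x => ?_⟩
    rw [← pow_mul]
    have h2 : p * k % Fintype.card G = 1 % Fintype.card G := by
      rw [hk]; exact (Nat.mod_eq_of_lt h1).symm
    calc x ^ (p * k) = x ^ (p * k % Fintype.card G) := (pow_mod_card x (p*k)).symm
      _ = x ^ (1 % Fintype.card G) := by rw [h2]
      _ = x ^ (1 : ℕ) := pow_mod_card x 1
      _ = x := pow_one x

theorem central_case (y : G) (hy : ∀ c : G, c * y = y * c) (m : ℕ) (g : G)
    (p : ℕ) [hp : Fact p.Prime] (hpG : Fintype.card G < p) :
    Nat.card {x : G // x ^ m = y ∧ (g * x) ^ m = y} =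
      Nat.card {x : G // x ^ m = y ^ p ∧ (g ^ p * x) ^ m = y ^ p} := by
  classical
  -- coprimality and p-th power injectivity
  have hcop : Nat.Coprime p (Fintype.card G) := by
    rw [Nat.Prime.coprime_iff_not_dvd hp.out]
    intro hdvd
    exact absurd (Nat.le_of_dvd Fintype.card_pos hdvd) (not_le.mpr hpG)
  obtain ⟨k, hk⟩ := exists_pow_pow_eq p hcop
  have hinj : ∀ a b : G, a ^ p = b ^ p → a = b := by
    intro a b hab
    rw [← hk a, hab, hk b]
  -- the root sets
  set R : Finset G := Finset.univ.filter (fun a => a ^ m = y) with hR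
  set R' : Finset G := Finset.univ.filter (fun a => a ^ m = y ^ p) with hR'
  -- conjugation fixes y
  have hy' : ∀ c : G, c * y * c⁻¹ = y := by
    intro c
    rw [hy c, mul_assoc, mul_inv_cancel, mul_one]
  -- R is conjugation-stable
  have hRconj : ∀ (c a : G), a ∈ R ↔ c * a * c⁻¹ ∈ R := by
    intro c a
    rw [hR, Finset.mem_filter, Finset.mem_filter]
    simp only [Finset.mem_univ, true_and]
    rw [conj_pow]
    constructor
    · intro h; rw [h, hy']
    · intro h
      calc a ^ m = c⁻¹ * (c * a ^ m * c⁻¹) * c := by group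
        _ = c⁻¹ * y * c := by rw [h]
        _ = y := by rw [show c⁻¹ * y * c = c⁻¹ * y * (c⁻¹)⁻¹ by rw [inv_inv], hy' c⁻¹]
  -- bijection a ↦ a^p maps R to R'
  have hRR' : ∀ a, a ∈ R → a ^ p ∈ R' := by
    intro a ha
    rw [hR, Finset.mem_filter] at ha
    rw [hR', Finset.mem_filter]
    refine ⟨Finset.mem_univ _, ?_⟩
    rw [← pow_mul, mul_comm p m, pow_mul, ha.2]
  have hR'R : ∀ b, b ∈ R' → b ^ k ∈ R ∧ (b ^ k) ^ p = b := by
    intro b hb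
    rw [hR', Finset.mem_filter] at hb
    have h2 : (b ^ k) ^ p = b := by
      rw [← pow_mul, mul_comm k p, pow_mul, hk b]
    refine ⟨?_, h2⟩
    rw [hR, Finset.mem_filter]
    refine ⟨Finset.mem_univ _, ?_⟩
    rw [← pow_mul, mul_comm k m, pow_mul, hb.2, hk]
  -- count the first subtype by pairs
  have hcount1 : Nat.card {x : G // x ^ m = y ∧ (g * x) ^ m = y}
      = ((R ×ˢ R).filter (fun q => q.1 * q.2⁻¹ = g)).card := by
    rw [Nat.card_eq_fintype_card, Fintype.card_subtype]
    refine Finset.card_bij' (fun x _ => (g * x, x)) (fun q _ => q.2) ?_ ?_ ?_ ?_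
    · intro x hx
      rw [Finset.mem_filter] at hx
      rw [Finset.mem_filter, Finset.mem_product]
      refine ⟨⟨?_, ?_⟩, by group⟩
      · rw [hR, Finset.mem_filter]; exact ⟨Finset.mem_univ _, hx.2.2⟩
      · rw [hR, Finset.mem_filter]; exact ⟨Finset.mem_univ _, hx.2.1⟩
    · intro q hq
      rw [Finset.mem_filter, Finset.mem_product] at hq
      obtain ⟨⟨h1, h2⟩, h3⟩ := hq
      rw [hR, Finset.mem_filter] at h1 h2
      rw [Finset.mem_filter]
      refine ⟨Finset.mem_univ _, h2.2, ?_⟩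
      have : g * q.2 = q.1 := by rw [← h3]; group
      rw [this]; exact h1.2
    · intro x _; rfl
    · intro q hq
      rw [Finset.mem_filter, Finset.mem_product] at hq
      have : g * q.2 = q.1 := by rw [← hq.2]; group
      exact Prod.ext this rfl
  -- count the second subtype by pairs over R'
  have hcount2 : Nat.card {x : G // x ^ m = y ^ p ∧ (g ^ p * x) ^ m = y ^ p}
      = ((R' ×ˢ R').filter (fun q => q.1 * q.2⁻¹ = g ^ p)).card := by
    rw [Nat.card_eq_fintype_card, Fintype.card_subtype]
    refine Finset.card_bij' (fun x _ => (g ^ p * x, x)) (fun q _ => q.2) ?_ ?_ ?_ ?_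
    · intro x hx
      rw [Finset.mem_filter] at hx
      rw [Finset.mem_filter, Finset.mem_product]
      refine ⟨⟨?_, ?_⟩, by group⟩
      · rw [hR', Finset.mem_filter]; exact ⟨Finset.mem_univ _, hx.2.2⟩
      · rw [hR', Finset.mem_filter]; exact ⟨Finset.mem_univ _, hx.2.1⟩
    · intro q hq
      rw [Finset.mem_filter, Finset.mem_product] at hq
      obtain ⟨⟨h1, h2⟩, h3⟩ := hq
      rw [hR', Finset.mem_filter] at h1 h2
      rw [Finset.mem_filter]
      refine ⟨Finset.mem_univ _, h2.2, ?_⟩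
      have : g ^ p * q.2 = q.1 := by rw [← h3]; group
      rw [this]; exact h1.2
    · intro x _; rfl
    · intro q hq
      rw [Finset.mem_filter, Finset.mem_product] at hq
      have : g ^ p * q.2 = q.1 := by rw [← hq.2]; group
      exact Prod.ext this rfl
  -- rewrite R'-pairs as p-th powers of R-pairs
  have hcount2' : ((R' ×ˢ R').filter (fun q => q.1 * q.2⁻¹ = g ^ p)).card
      = ((R ×ˢ R).filter (fun q => q.1 ^ p * (q.2 ^ p)⁻¹ = g ^ p)).card := by
    refine Finset.card_bij' (fun q _ => (q.1 ^ k, q.2 ^ k)) (fun q _ => (q.1 ^ p, q.2 ^ p))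
      ?_ ?_ ?_ ?_
    · intro q hq
      rw [Finset.mem_filter, Finset.mem_product] at hq
      obtain ⟨⟨h1, h2⟩, h3⟩ := hq
      rw [Finset.mem_filter, Finset.mem_product]
      refine ⟨⟨(hR'R _ h1).1, (hR'R _ h2).1⟩, ?_⟩
      rw [(hR'R _ h1).2, (hR'R _ h2).2, h3]
    · intro q hq
      rw [Finset.mem_filter, Finset.mem_product] at hq
      obtain ⟨⟨h1, h2⟩, h3⟩ := hq
      rw [Finset.mem_filter, Finset.mem_product]
      exact ⟨⟨hRR' _ h1, hRR' _ h2⟩, h3⟩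
    · intro q hq
      rw [Finset.mem_filter, Finset.mem_product] at hq
      exact Prod.ext (hR'R _ hq.1.1).2 (hR'R _ hq.1.2).2
    · intro q _
      exact Prod.ext (hk q.1) (hk q.2)
  -- the group algebra elements
  set T : MonoidAlgebra (ZMod p) G := ∑ a ∈ R, MonoidAlgebra.single a 1 with hT
  set Ts : MonoidAlgebra (ZMod p) G := ∑ a ∈ R, MonoidAlgebra.single a⁻¹ 1 with hTs
  -- conjugation equivalences
  set γc : G → G ≃ G := fun c =>
    ⟨fun a => c * a * c⁻¹, fun a => c⁻¹ * a * c, fun a => by group, fun a => by group⟩ with hγc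
  have hprod : T * Ts = ∑ q ∈ R ×ˢ R, MonoidAlgebra.single (q.1 * q.2⁻¹) (1 : ZMod p) := by
    rw [hT, hTs, Finset.sum_mul_sum]
    rw [Finset.sum_product]
    refine Finset.sum_congr rfl fun a _ => Finset.sum_congr rfl fun b _ => ?_
    rw [MonoidAlgebra.single_mul_single, one_mul]
  have hneck1 : (T * Ts) ^ p = ∑ q ∈ R ×ˢ R,
      MonoidAlgebra.single ((q.1 * q.2⁻¹) ^ p) (1 : ZMod p) := by
    rw [hprod]
    exact necklace p hpG (R ×ˢ R) (fun q => q.1 * q.2⁻¹)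
      (fun c => Equiv.prodCongr (γc c) (γc c))
      (by
        intro c q
        rcases q with ⟨a, b⟩
        simp only [Equiv.prodCongr_apply, Prod.map, Finset.mem_product, hγc]
        constructor
        · rintro ⟨h1, h2⟩; exact ⟨(hRconj c a).mp h1, (hRconj c b).mp h2⟩
        · rintro ⟨h1, h2⟩; exact ⟨(hRconj c a).mpr h1, (hRconj c b).mpr h2⟩)
      (by
        intro c q
        rcases q with ⟨a, b⟩
        simp only [Equiv.prodCongr_apply, Prod.map, hγc, Equiv.coe_fn_mk]
        group)
  have hneck2 : T ^ p = ∑ a ∈ R, MonoidAlgebra.single (a ^ p) (1 : ZMod p) := by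
    rw [hT]
    exact necklace p hpG R id γc
      (fun c a => hRconj c a)
      (fun c a => by simp only [hγc, Equiv.coe_fn_mk, id])
  have hneck3 : Ts ^ p = ∑ a ∈ R, MonoidAlgebra.single ((a⁻¹) ^ p) (1 : ZMod p) := by
    rw [hTs]
    have := necklace p hpG R (fun a => a⁻¹) γc
      (fun c a => hRconj c a)
      (fun c a => by simp only [hγc, Equiv.coe_fn_mk]; group)
    exact this
  -- T and Ts commute
  have hTsingle : ∀ w : G, Commute T (MonoidAlgebra.single w (1 : ZMod p)) := by
    intro w
    show T * _ = _ * T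
    rw [hT, Finset.sum_mul, Finset.mul_sum]
    have h1 : ∀ a, MonoidAlgebra.single a (1 : ZMod p) * MonoidAlgebra.single w 1
        = MonoidAlgebra.single (a * w) 1 := by
      intro a; rw [MonoidAlgebra.single_mul_single, one_mul]
    have h2 : ∀ a, MonoidAlgebra.single w (1 : ZMod p) * MonoidAlgebra.single a 1
        = MonoidAlgebra.single (w * a) 1 := by
      intro a; rw [MonoidAlgebra.single_mul_single, one_mul]
    simp only [h1, h2]
    refine Finset.sum_nbij' (fun a => w⁻¹ * a * w) (fun a => w * a * w⁻¹) ?_ ?_ ?_ ?_ ?_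
    · intro a ha
      have := (hRconj w⁻¹ a).mp ha
      rwa [inv_inv] at this
    · intro a ha
      exact (hRconj w a).mp ha
    · intro a _; group
    · intro a _; group
    · intro a _
      congr 1
      group
  have hcomm : Commute T Ts := by
    rw [hTs]
    exact Commute.sum_right _ _ _ (fun b _ => hTsingle b⁻¹)
  -- main coefficient identity
  have hmain : (T * Ts) ^ p = T ^ p * Ts ^ p := hcomm.mul_pow p
  have hlhs : ((T * Ts) ^ p).coeff (g ^ p)
      = (((R ×ˢ R).filter (fun q => (q.1 * q.2⁻¹) ^ p = g ^ p)).card : ZMod p) := by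
    rw [hneck1]
    exact coeff_sum_single (R ×ˢ R) (fun q => (q.1 * q.2⁻¹) ^ p) (g ^ p)
  have hprod2 : T ^ p * Ts ^ p
      = ∑ q ∈ R ×ˢ R, MonoidAlgebra.single (q.1 ^ p * (q.2 ^ p)⁻¹) (1 : ZMod p) := by
    rw [hneck2, hneck3, Finset.sum_mul_sum]
    rw [Finset.sum_product]
    refine Finset.sum_congr rfl fun a _ => Finset.sum_congr rfl fun b _ => ?_
    rw [MonoidAlgebra.single_mul_single, one_mul, inv_pow]
  have hrhs : (T ^ p * Ts ^ p).coeff (g ^ p)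
      = (((R ×ˢ R).filter (fun q => q.1 ^ p * (q.2 ^ p)⁻¹ = g ^ p)).card : ZMod p) := by
    rw [hprod2]
    exact coeff_sum_single (R ×ˢ R) (fun q => q.1 ^ p * (q.2 ^ p)⁻¹) (g ^ p)
  -- the power filter equals the plain filter
  have hfiltereq : (R ×ˢ R).filter (fun q => (q.1 * q.2⁻¹) ^ p = g ^ p)
      = (R ×ˢ R).filter (fun q => q.1 * q.2⁻¹ = g) := by
    apply Finset.filter_congr
    intro q _
    constructor
    · intro h; exact hinj _ _ (by simpa using h)
    · intro h; simp [h]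
  -- bounds
  have hBle : ((R ×ˢ R).filter (fun q => q.1 * q.2⁻¹ = g)).card ≤ Fintype.card G := by
    rw [← Finset.card_univ]
    apply Finset.card_le_card_of_injOn (fun q => q.2) (fun q _ => Finset.mem_univ _)
    intro q hq q' hq' h2
    simp only [Finset.coe_filter, Set.mem_setOf_eq] at hq hq'
    dsimp only at h2
    have e1 : q.1 = g * q.2 := by rw [← hq.2]; group
    have e2 : q'.1 = g * q'.2 := by rw [← hq'.2]; group
    refine Prod.ext ?_ h2
    rw [e1, e2, h2]
  have hAle : ((R ×ˢ R).filter (fun q => q.1 ^ p * (q.2 ^ p)⁻¹ = g ^ p)).card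
      ≤ Fintype.card G := by
    rw [← Finset.card_univ]
    apply Finset.card_le_card_of_injOn (fun q => q.2) (fun q _ => Finset.mem_univ _)
    intro q hq q' hq' h2
    simp only [Finset.coe_filter, Set.mem_setOf_eq] at hq hq'
    dsimp only at h2
    have e1 : q.1 ^ p = g ^ p * q.2 ^ p := by rw [← hq.2]; group
    have e2 : q'.1 ^ p = g ^ p * q'.2 ^ p := by rw [← hq'.2]; group
    refine Prod.ext (hinj _ _ ?_) h2
    rw [e1, e2, h2]
  -- put everything together
  have hcast : (((R ×ˢ R).filter (fun q => q.1 ^ p * (q.2 ^ p)⁻¹ = g ^ p)).card : ZMod p)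
      = (((R ×ˢ R).filter (fun q => q.1 * q.2⁻¹ = g)).card : ZMod p) := by
    rw [← hrhs, ← hmain, hlhs, hfiltereq]
  have hfin : ((R ×ˢ R).filter (fun q => q.1 ^ p * (q.2 ^ p)⁻¹ = g ^ p)).card
      = ((R ×ˢ R).filter (fun q => q.1 * q.2⁻¹ = g)).card := by
    have hv := congrArg ZMod.val hcast
    rwa [ZMod.val_cast_of_lt (lt_of_le_of_lt hAle hpG),
      ZMod.val_cast_of_lt (lt_of_le_of_lt hBle hpG)] at hv
  rw [hcount1, hcount2, hcount2', hfin]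

end Main

/-- The counting formula of the paper's Corollary: for a finite group `G`,
`r` an integer coprime to the exponent `e` of `G`, `m : ℤ`, and `g y : G`,
`|{x ∈ G | x^m = (g*x)^m = y}| = |{x ∈ G | x^m = (g^r*x)^m = y^r}|`. -/
theorem counting_formula {G : Type*} [Group G] [Fintype G] (r : ℤ)
    (hr : Int.gcd r (Monoid.exponent G) = 1) (m : ℤ) (g y : G) :
    Nat.card {x : G // x ^ m = y ∧ (g * x) ^ m = y} =
      Nat.card {x : G // x ^ m = y ^ r ∧ (g ^ r * x) ^ m = y ^ r} := by
  classical
  set e := Monoid.exponent G with hedef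
  have he : e ≠ 0 := Monoid.exponent_ne_zero_of_finite
  haveI : NeZero e := ⟨he⟩
  have hepos : (0 : ℤ) < (e : ℤ) := by exact_mod_cast Nat.pos_of_ne_zero he
  -- reduce the integer exponent m to a natural number
  set mm : ℕ := (m % (e : ℤ)).toNat with hmmdef
  have hmmeq : ∀ x : G, x ^ m = x ^ mm := by
    intro x
    have h1 : m = (e : ℤ) * (m / (e : ℤ)) + m % (e : ℤ) := (Int.mul_ediv_add_emod m (e : ℤ)).symm
    have h2 : x ^ m = (x ^ (e : ℤ)) ^ (m / (e : ℤ)) * x ^ (m % (e : ℤ)) := by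
      conv_lhs => rw [h1]
      rw [zpow_add, zpow_mul]
    have h3 : x ^ (e : ℤ) = 1 := by
      rw [zpow_natCast]
      exact Monoid.pow_exponent_eq_one x
    have h4 : x ^ (m % (e : ℤ)) = x ^ mm := by
      rw [hmmdef, ← zpow_natCast, Int.toNat_of_nonneg (Int.emod_nonneg m (ne_of_gt hepos))]
    rw [h2, h3, one_zpow, one_mul, h4]
  -- find a suitable prime via Dirichlet
  have hunit : IsUnit ((r : ZMod e)) := by
    obtain ⟨u, v, huv⟩ : IsCoprime r (e : ℤ) := Int.isCoprime_iff_gcd_eq_one.mpr hr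
    apply IsUnit.of_mul_eq_one ((u : ZMod e))
    have := congrArg (fun t : ℤ => ((t : ZMod e))) huv
    push_cast at this
    rw [ZMod.natCast_self] at this
    simpa [mul_comm] using this
  obtain ⟨p, hpgt, hpp, hpmod⟩ :=
    Nat.forall_exists_prime_gt_and_eq_mod (q := e) hunit (Fintype.card G)
  haveI : Fact p.Prime := ⟨hpp⟩
  have hpG : Fintype.card G < p := hpgt
  -- r-th powers equal p-th powers
  have hdvd : ((e : ℤ)) ∣ r - (p : ℤ) := by
    have h0 : ((p : ℤ) : ZMod e) = ((r : ℤ) : ZMod e) := by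
      push_cast
      exact_mod_cast hpmod
    rw [ZMod.intCast_eq_intCast_iff] at h0
    exact h0.dvd
  have hpow : ∀ x : G, x ^ r = x ^ p := by
    intro x
    obtain ⟨t, ht⟩ := hdvd
    have h5 : r = (p : ℤ) + (e : ℤ) * t := by linarith [ht]
    have h6 : x ^ r = x ^ (p : ℤ) * (x ^ (e : ℤ)) ^ t := by
      rw [h5, zpow_add, zpow_mul]
    rw [show x ^ (e : ℤ) = 1 by rw [zpow_natCast]; exact Monoid.pow_exponent_eq_one x,
      one_zpow, mul_one] at h6
    rw [h6, zpow_natCast]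
  -- rewrite the goal with natural exponents
  have hgoal1 : Nat.card {x : G // x ^ m = y ∧ (g * x) ^ m = y}
      = Nat.card {x : G // x ^ mm = y ∧ (g * x) ^ mm = y} := by
    apply Nat.card_congr
    apply Equiv.subtypeEquivRight
    intro x
    rw [hmmeq x, hmmeq (g * x)]
  have hgoal2 : Nat.card {x : G // x ^ m = y ^ r ∧ (g ^ r * x) ^ m = y ^ r}
      = Nat.card {x : G // x ^ mm = y ^ p ∧ (g ^ p * x) ^ mm = y ^ p} := by
    apply Nat.card_congr
    apply Equiv.subtypeEquivRight
    intro x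
    rw [hmmeq x, hpow y, hpow g, hmmeq (g ^ p * x)]
  rw [hgoal1, hgoal2]
  -- coprimality of p with |G| and the inverse-power exponent
  have hcop : Nat.Coprime p (Fintype.card G) := by
    rw [Nat.Prime.coprime_iff_not_dvd hpp]
    intro hdvd'
    exact absurd (Nat.le_of_dvd Fintype.card_pos hdvd') (not_le.mpr hpG)
  obtain ⟨k, hk⟩ := exists_pow_pow_eq (G := G) p hcop
  -- centralizer of y
  set H := Subgroup.centralizer ({y} : Set G) with hH
  have hyH : y ∈ H := by
    rw [hH, Subgroup.mem_centralizer_iff]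
    rintro h ⟨rfl⟩
    rfl
  have hmemH : ∀ z : G, z ∈ H ↔ y * z = z * y := by
    intro z
    rw [hH, Subgroup.mem_centralizer_iff]
    constructor
    · intro h; exact h y rfl
    · rintro h h' ⟨rfl⟩; exact h
  -- elements whose mm-th power is y (resp. y^p) lie in H
  have hxH : ∀ x : G, x ^ mm = y → x ∈ H := by
    intro x hx
    rw [hmemH, ← hx]
    exact ((Commute.refl x).pow_right mm).symm.eq
  have hxH' : ∀ x : G, x ^ mm = y ^ p → x ∈ H := by
    intro x hx
    rw [hmemH]
    have h1 : y = (x ^ mm) ^ k := by rw [hx]; exact (hk y).symm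
    rw [h1]
    exact (((Commute.refl x).pow_right mm).pow_right k).symm.eq
  by_cases hgH : g ∈ H
  case neg =>
    -- both sets are empty
    have hA : IsEmpty {x : G // x ^ mm = y ∧ (g * x) ^ mm = y} := by
      constructor
      rintro ⟨x, hx1, hx2⟩
      apply hgH
      have h1 : x ∈ H := hxH x hx1
      have h2 : g * x ∈ H := hxH (g * x) hx2
      have := H.mul_mem h2 (H.inv_mem h1)
      rwa [mul_inv_cancel_right] at this
    have hB : IsEmpty {x : G // x ^ mm = y ^ p ∧ (g ^ p * x) ^ mm = y ^ p} := by
      constructor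
      rintro ⟨x, hx1, hx2⟩
      apply hgH
      have h1 : x ∈ H := hxH' x hx1
      have h2 : g ^ p * x ∈ H := hxH' (g ^ p * x) hx2
      have h3 : g ^ p ∈ H := by
        have := H.mul_mem h2 (H.inv_mem h1)
        rwa [mul_inv_cancel_right] at this
      have h4 : (g ^ p) ^ k ∈ H := H.pow_mem h3 k
      rwa [hk g] at h4
    rw [Nat.card_of_isEmpty (α := {x : G // x ^ mm = y ∧ (g * x) ^ mm = y}),
      Nat.card_of_isEmpty]
  case pos =>
    -- transfer to the centralizer, where y is central
    set y' : H := ⟨y, hyH⟩ with hy'def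
    set g' : H := ⟨g, hgH⟩ with hg'def
    have hycentral : ∀ c : H, c * y' = y' * c := by
      rintro ⟨c, hc⟩
      apply Subtype.ext
      exact ((hmemH c).mp hc).symm
    have hHcard : Fintype.card H < p :=
      lt_of_le_of_lt (Fintype.card_le_of_injective _ Subtype.val_injective) hpG
    have hEA : Nat.card {x : G // x ^ mm = y ∧ (g * x) ^ mm = y}
        = Nat.card {x : H // x ^ mm = y' ∧ (g' * x) ^ mm = y'} := by
      apply Nat.card_congr
      refine ⟨fun x => ⟨⟨x.1, hxH x.1 x.2.1⟩, ?_, ?_⟩, fun x => ⟨x.1.1, ?_, ?_⟩, ?_, ?_⟩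
      · apply Subtype.ext
        push_cast
        exact x.2.1
      · apply Subtype.ext
        push_cast
        exact x.2.2
      · have := congrArg (Subtype.val) x.2.1
        push_cast at this
        exact this
      · have := congrArg (Subtype.val) x.2.2
        push_cast at this
        exact this
      · intro x; rfl
      · intro x; apply Subtype.ext; rfl
    have hEB : Nat.card {x : G // x ^ mm = y ^ p ∧ (g ^ p * x) ^ mm = y ^ p}
        = Nat.card {x : H // x ^ mm = y' ^ p ∧ (g' ^ p * x) ^ mm = y' ^ p} := by
      apply Nat.card_congr
      refine ⟨fun x => ⟨⟨x.1, hxH' x.1 x.2.1⟩, ?_, ?_⟩, fun x => ⟨x.1.1, ?_, ?_⟩, ?_, ?_⟩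
      · apply Subtype.ext
        push_cast
        exact x.2.1
      · apply Subtype.ext
        push_cast
        exact x.2.2
      · have := congrArg (Subtype.val) x.2.1
        push_cast at this
        exact this
      · have := congrArg (Subtype.val) x.2.2
        push_cast at this
        exact this
      · intro x; rfl
      · intro x; apply Subtype.ext; rfl
    rw [hEA, hEB]
    exact central_case y' hycentral mm g' p hHcard
end

section
/- Let n be a natural number, let S_n denote the symmetric group on n letters, and let r be a natural number coprime to the exponent of S_n. Then for every permutation g ∈ S_n, the power g^r is conjugate to g in S_n. -/
open Equiv Equiv.Perm

lemma cycleType_pow_coprime {α : Type*} [Fintype α] [DecidableEq α] (r : ℕ) (g : Perm α) :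
    Nat.Coprime r (orderOf g) → (g ^ r).cycleType = g.cycleType := by
  induction g using cycle_induction_on with
  | base_one => simp
  | base_cycles σ hσ =>
    intro hr
    have h1 : IsCycle (σ ^ r) := (hσ.pow_iff).2 hr
    rw [h1.cycleType, hσ.cycleType, support_pow_coprime hr]
  | induction_disjoint σ τ hd hc hσ hτ =>
    intro hr
    rw [hd.orderOf] at hr
    have hdp : Disjoint (σ ^ r) (τ ^ r) := hd.pow_disjoint_pow r r
    rw [hd.commute.mul_pow, hdp.cycleType_mul, hd.cycleType_mul,
      hσ (hr.coprime_dvd_right (Nat.dvd_lcm_left _ _)),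
      hτ (hr.coprime_dvd_right (Nat.dvd_lcm_right _ _))]

/-- For the symmetric group `S_n` and `r` coprime to its exponent, every
permutation `g` is conjugate to its `r`-th power `g^r`. -/
theorem symmetricGroup_isConj_pow (n : ℕ) (r : ℕ)
    (hr : Nat.Coprime r (Monoid.exponent (Equiv.Perm (Fin n))))
    (g : Equiv.Perm (Fin n)) :
    IsConj g (g ^ r) := by
  refine isConj_of_cycleType_eq ?_ |>.symm
  exact cycleType_pow_coprime r g (hr.coprime_dvd_right (Monoid.order_dvd_exponent g))
end
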